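/- Let A = ⟨X, Y, ⊏⟩ be a relational system and θ a regular cardinal. If D ⊆ Y is a strongly θ-A-dominating family, then D is |D|-A-dominating; consequently 𝔡(A) ≤ |D| ≤ 𝔟(A). -/
import Mathlib

universe u

open Cardinal

/-- `D` is an `A`-dominating family for the relational system given by `r`. -/
def RelDominating {X Y : Type u} (r : X → Y → Prop) (D : Set Y) : Prop :=
  ∀ x : X, ∃ y ∈ D, r x y

/-- `D` is a `λ`-`A`-dominating family. -/
def RelThetaDominating {X Y : Type u} (r : X → Y → Prop) (θ : Cardinal) (D : Set Y) : Prop :=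
  ∀ E : Set X, #E < θ → ∃ y ∈ D, ∀ x ∈ E, r x y

/-- `D` is a strongly `θ`-`A`-dominating family: `|D| ≥ θ` and for every `x`,
fewer than `θ` many members of `D` fail to dominate `x`. -/
def RelStronglyDominating {X Y : Type u} (r : X → Y → Prop) (θ : Cardinal) (D : Set Y) : Prop :=
  θ ≤ #D ∧ ∀ x : X, #{y : Y // y ∈ D ∧ ¬ r x y} < θ

/-- `F` is an `A`-unbounded family. -/
def RelUnbounded {X Y : Type u} (r : X → Y → Prop) (F : Set X) : Prop :=
  ¬ ∃ y : Y, ∀ x ∈ F, r x y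

/-- `𝔡(A)`: the least size of an `A`-dominating family. -/
noncomputable def dNum {X Y : Type u} (r : X → Y → Prop) : Cardinal :=
  sInf {c | ∃ D : Set Y, RelDominating r D ∧ #D = c}

/-- `𝔟(A)`: the least size of an `A`-unbounded family. -/
noncomputable def bNum {X Y : Type u} (r : X → Y → Prop) : Cardinal :=
  sInf {c | ∃ F : Set X, RelUnbounded r F ∧ #F = c}

theorem stronglyDominating_dominating {X Y : Type u} (r : X → Y → Prop)
    (θ : Cardinal) (hθ : θ.IsRegular) (D : Set Y) (hD : RelStronglyDominating r θ D)
    (hb : ∃ F : Set X, RelUnbounded r F) (hd : ∃ D' : Set Y, RelDominating r D') :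
    RelThetaDominating r (#D) D ∧ dNum r ≤ #D ∧ #D ≤ bNum r := by
  obtain ⟨hθD, hbad⟩ := hD
  have hθ0 := hθ.aleph0_le
  -- main claim
  have main : RelThetaDominating r (#D) D := by
    intro E hE
    set B : E → Set Y := fun x => {y | y ∈ D ∧ ¬ r x y} with hB
    have hBcard : ∀ x : E, #(B x) < θ := fun x => hbad x
    have hU : #(⋃ x : E, B x) < #D := by
      have h1 : #(⋃ x : E, B x) ≤ Cardinal.sum fun x : E => #(B x) :=
        Cardinal.mk_iUnion_le_sum_mk
      rcases lt_or_ge (#E) θ with hEθ | hEθ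
      · exact lt_of_le_of_lt h1
          (lt_of_lt_of_le (Cardinal.sum_lt_of_isRegular hθ hEθ hBcard) hθD)
      · have h2 : (Cardinal.sum fun x : E => #(B x)) ≤ #E * θ := by
          rw [← Cardinal.sum_const']
          exact Cardinal.sum_le_sum _ _ fun x => (hBcard x).le
        have h3 : #E * θ = #E :=
          Cardinal.mul_eq_left (hθ0.trans hEθ) hEθ hθ.pos.ne'
        exact lt_of_le_of_lt (h1.trans (h2.trans_eq h3)) hE
    have : ¬ D ⊆ ⋃ x : E, B x := fun hsub => absurd (Cardinal.mk_le_mk_of_subset hsub) hU.not_ge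
    obtain ⟨y, hyD, hyU⟩ := Set.not_subset.mp this
    refine ⟨y, hyD, fun x hx => ?_⟩
    by_contra hry
    exact hyU (Set.mem_iUnion.mpr ⟨⟨x, hx⟩, hyD, hry⟩)
  refine ⟨main, ?_, ?_⟩
  · have hdom : RelDominating r D := by
      intro x
      obtain ⟨y, hyD, hy⟩ := main {x} (by
        simpa using lt_of_lt_of_le (Cardinal.one_lt_aleph0) (hθ0.trans hθD))
      exact ⟨y, hyD, hy x rfl⟩
    exact csInf_le (OrderBot.bddBelow _) ⟨D, hdom, rfl⟩
  · obtain ⟨F₀, hF₀⟩ := hb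
    have hne : {c | ∃ F : Set X, RelUnbounded r F ∧ #F = c}.Nonempty := ⟨#F₀, F₀, hF₀, rfl⟩
    obtain ⟨F, hF, hFc⟩ := csInf_mem hne
    rw [bNum, ← hFc]
    by_contra hlt
    push_neg at hlt
    obtain ⟨y, _, hy⟩ := main F hlt
    exact hF ⟨y, hy⟩
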